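/- If every vertex of a finite nonempty multigraph has degree at least t+1, and between any two distinct vertices there are at most b parallel edges (b ≥ 1), then the number of edges is at least (1/2)·(1 + ⌈(t+1)/b⌉)·(t+1). -/

import Mathlib

/-- A finite loopless multigraph given by a symmetric multiplicity function `mult`.
`∑ v, ∑ w, mult v w` counts each edge twice (handshaking), so the conclusion
`(1 + ⌈(t+1)/b⌉) * (t+1) ≤ ∑ v, ∑ w, mult v w` says that the number of edges is
at least `(1/2) * (1 + ⌈(t+1)/b⌉) * (t+1)`.  Here `(t + b) / b = ⌈(t+1)/b⌉`. -/
theorem stmt_2 {V : Type*} [Fintype V] [DecidableEq V] [Nonempty V]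
    (mult : V → V → ℕ) (t b : ℕ) (hb : 1 ≤ b)
    (hsymm : ∀ v w : V, mult v w = mult w v)
    (hloopless : ∀ v : V, mult v v = 0)
    (hmult : ∀ v w : V, mult v w ≤ b)
    (hdeg : ∀ v : V, t + 1 ≤ ∑ w : V, mult v w) :
    (1 + (t + b) / b) * (t + 1) ≤ ∑ v : V, ∑ w : V, mult v w := by
  obtain ⟨v0⟩ := ‹Nonempty V›
  set N : Finset V := Finset.univ.filter (fun w => 0 < mult v0 w) with hN
  have hv0 : v0 ∉ N := by simp [hN, hloopless v0]
  -- degree of v0 bounded by b * |N|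
  have hdegN : t + 1 ≤ b * N.card := by
    calc t + 1 ≤ ∑ w : V, mult v0 w := hdeg v0
    _ = ∑ w ∈ N, mult v0 w := by
        rw [← Finset.sum_filter_ne_zero]
        apply Finset.sum_congr
        · ext w; simp [hN]
        · intros; rfl
    _ ≤ ∑ w ∈ N, b := Finset.sum_le_sum fun w _ => hmult v0 w
    _ = N.card * b := by rw [Finset.sum_const, smul_eq_mul]
    _ = b * N.card := Nat.mul_comm _ _
  have hNcard : (t + b) / b ≤ N.card := by
    rw [Nat.div_le_iff_le_mul_add_pred (by omega)]
    omega
  have hcard : 1 + (t + b) / b ≤ Fintype.card V := by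
    have : N.card + 1 ≤ Fintype.card V := by
      have := Finset.card_insert_of_notMem hv0
      have hsub : (insert v0 N).card ≤ Fintype.card V := Finset.card_le_univ _
      omega
    omega
  calc (1 + (t + b) / b) * (t + 1) ≤ Fintype.card V * (t + 1) :=
        Nat.mul_le_mul_right _ hcard
    _ = ∑ _v : V, (t + 1) := by simp [Finset.sum_const, mul_comm]
    _ ≤ ∑ v : V, ∑ w : V, mult v w := Finset.sum_le_sum fun v _ => hdeg v
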